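/- Let K1, K2, K3 : ℕ → ℝ with K3(n) ≠ 0 for all n, and let (b_n) be the paper's auxiliary sequence b associated with K1, K2, K3 (b_1 = K3(0) and the one-step recursion from the paper). Then b_2 = K3(1)·(K3(0) + K2(0) + K1(0)), and for every n ≥ 2, b_{n+1} = [K3(n)·(n − 1 + K1(n−1) + K2(n−1) + K3(n−1))/K3(n−1)]·b_n − K3(n)·(n − 1 + K1(n−1))·b_{n−1}. -/
import Mathlib


open Finset

/-- Simplification of the recursion for the paper's auxiliary sequence `b`:
`b_2 = K3(1)(K3(0)+K2(0)+K1(0))` and, for `n ≥ 2`,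
`b_{n+1} = [K3(n)(n−1+K1(n−1)+K2(n−1)+K3(n−1))/K3(n−1)]·b_n − K3(n)(n−1+K1(n−1))·b_{n−1}`. -/
theorem aux_b_three_term_recursion (K1 K2 K3 b : ℕ → ℝ)
    (hK3 : ∀ n : ℕ, K3 n ≠ 0)
    (hb1 : b 1 = K3 0)
    (hbRec : ∀ n : ℕ, 2 ≤ n →
      b n = K3 (n - 1) * b (n - 1)
        + K3 (n - 1) * ∑ i ∈ Finset.Icc 1 (n - 2), K2 i * b i *
            ∏ j ∈ Finset.Icc (i + 1) (n - 2), ((j : ℝ) + K1 j + K2 j)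
        + K3 (n - 1) * ∏ i ∈ Finset.range (n - 1), ((i : ℝ) + K1 i + K2 i)) :
    b 2 = K3 1 * (K3 0 + K2 0 + K1 0)
    ∧ ∀ n : ℕ, 2 ≤ n →
      b (n + 1) = K3 n * ((n : ℝ) - 1 + K1 (n - 1) + K2 (n - 1) + K3 (n - 1)) / K3 (n - 1) * b n
        - K3 n * ((n : ℝ) - 1 + K1 (n - 1)) * b (n - 1) := by
  constructor
  · have h2 := hbRec 2 (by norm_num)
    simp [hb1] at h2
    rw [h2]; ring
  · intro n hn
    obtain ⟨m, rfl⟩ : ∃ m, n = m + 2 := ⟨n - 2, by omega⟩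
    have hS : ∀ i ∈ Finset.Icc 1 m,
        K2 i * b i * ∏ j ∈ Finset.Icc (i + 1) (m + 1), ((j : ℝ) + K1 j + K2 j)
        = (K2 i * b i * ∏ j ∈ Finset.Icc (i + 1) m, ((j : ℝ) + K1 j + K2 j))
          * (((m : ℝ) + 1) + K1 (m + 1) + K2 (m + 1)) := by
      intro i hi
      have hi' : i + 1 ≤ m + 1 := by
        have := (Finset.mem_Icc.mp hi).2; omega
      rw [Finset.prod_Icc_succ_top hi']
      push_cast; ring
    have h3 := hbRec (m + 3) (by omega)
    have h2 := hbRec (m + 2) (by omega)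
    simp only [show m + 3 - 1 = m + 2 from rfl, show m + 3 - 2 = m + 1 from rfl,
      show m + 2 - 1 = m + 1 from rfl, show m + 2 - 2 = m from rfl] at h3 h2 ⊢
    have he : Finset.Icc (m + 1 + 1) (m + 1) = ∅ := Finset.Icc_eq_empty_of_lt (by omega)
    rw [Finset.sum_Icc_succ_top (by omega : 1 ≤ m + 1), Finset.sum_congr rfl hS,
      ← Finset.sum_mul, Finset.prod_range_succ, he, Finset.prod_empty] at h3
    have key : K3 (m + 1) * b (m + 3)
        = K3 (m + 2) * ((m : ℝ) + 1 + K1 (m + 1) + K2 (m + 1) + K3 (m + 1)) * b (m + 2)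
          - K3 (m + 1) * (K3 (m + 2) * ((m : ℝ) + 1 + K1 (m + 1)) * b (m + 1)) := by
      rw [h3]
      push_cast
      linear_combination (-(K3 (m + 2) * ((m : ℝ) + 1 + K1 (m + 1) + K2 (m + 1)))) * h2
    have hne := hK3 (m + 1)
    push_cast
    field_simp
    linear_combination key
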